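/- Let p be a prime, m ≥ 1, and let F be the m-dimensional linear fractional transformation (LFT) with parameter (i, σ, p⃗, q⃗). Then F maps D_m bijectively onto D_m, and its inverse is given by: if (x_1,…,x_m) = F^{-1}(y_1,…,y_m), then x_i = p_s/(y_s + q_s) and, for k ≠ i, x_k = p_s(y_t + q_t)/(p_t(y_s + q_s)), where s = σ^{-1}(i) and t = σ^{-1}(k). -/

import Mathlib

open MeasureTheory Filter Topology
open scoped Classical

noncomputable section

namespace PadicCF

variable (p : ℕ) [Fact p.Prime]

/-- `pℤ_p`, the maximal ideal of the `p`-adic integers, viewed inside `ℚ_p`. -/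
def pZ : Set ℚ_[p] := {x | ‖x‖ ≤ (p : ℝ)⁻¹}

/-- `D_m`: tuples `(x_1, …, x_m)` such that `1, x_1, …, x_m` are linearly
independent over `ℤ`. -/
def Dm (m : ℕ) : Set (Fin m → ℚ_[p]) :=
  {x | ∀ (c : ℤ) (a : Fin m → ℤ), (c : ℚ_[p]) + ∑ j, (a j : ℚ_[p]) * x j = 0 →
    c = 0 ∧ ∀ j, a j = 0}

/-- `D_m' = D_m ∩ (pℤ_p)^m`. -/
def Dm' (m : ℕ) : Set (Fin m → ℚ_[p]) := {x | x ∈ Dm p m ∧ ∀ j, x j ∈ pZ p}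

variable {m : ℕ}

/-- The `m`-dimensional linear fractional transformation with parameter `(i, σ, pv, qv)`. -/
def LFT (i : Fin m) (σ : Equiv.Perm (Fin m)) (pv qv : Fin m → ℚ)
    (x : Fin m → ℚ_[p]) : Fin m → ℚ_[p] := fun k =>
  if k = σ⁻¹ i then (pv k : ℚ_[p]) / x i - (qv k : ℚ_[p])
  else (pv k : ℚ_[p]) * x (σ k) / x i - (qv k : ℚ_[p])

/-- The inverse of the LFT with parameter `(i, σ, pv, qv)`, given by the explicit formulas
`x_i = p_s/(y_s + q_s)` and `x_k = p_s (y_t + q_t) / (p_t (y_s + q_s))` for `k ≠ i`,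
where `s = σ⁻¹ i`, `t = σ⁻¹ k`. -/
def LFTinv (i : Fin m) (σ : Equiv.Perm (Fin m)) (pv qv : Fin m → ℚ)
    (y : Fin m → ℚ_[p]) : Fin m → ℚ_[p] := fun k =>
  if k = i then (pv (σ⁻¹ i) : ℚ_[p]) / (y (σ⁻¹ i) + (qv (σ⁻¹ i) : ℚ_[p]))
  else (pv (σ⁻¹ i) : ℚ_[p]) * (y (σ⁻¹ k) + (qv (σ⁻¹ k) : ℚ_[p])) /
        ((pv (σ⁻¹ k) : ℚ_[p]) * (y (σ⁻¹ i) + (qv (σ⁻¹ i) : ℚ_[p])))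

/-- Hyperbolicity of an LFT, Definition 2.6 of the paper.  Here `ord` is `padicValRat p`;
the case `q_k = 0` (where `ord q_k = ∞` by convention) is listed explicitly in (iv). -/
def Hyperbolic (i : Fin m) (σ : Equiv.Perm (Fin m)) (pv qv : Fin m → ℚ) : Prop :=
  (∀ k, pv k ≠ 0 ∧ 0 ≤ padicValRat p (pv k)) ∧
  (qv (σ⁻¹ i) ≠ 0 ∧ padicValRat p (qv (σ⁻¹ i)) ≤ 0 ∧
    0 < padicValRat p (pv (σ⁻¹ i) / qv (σ⁻¹ i))) ∧
  (∀ k, k ≠ σ⁻¹ i → qv k ≠ 0 → padicValRat p (qv k) ≤ 0 →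
    padicValRat p (pv k / qv k) < padicValRat p (pv (σ⁻¹ i) / qv (σ⁻¹ i))) ∧
  (∀ k, k ≠ σ⁻¹ i → (qv k = 0 ∨ 0 < padicValRat p (qv k)) →
    padicValRat p (pv k) < padicValRat p (pv (σ⁻¹ i) / qv (σ⁻¹ i)))

/-- `F⁻¹(D_m')`, i.e. the image of `D_m'` under the (formula-defined) inverse of the LFT. -/
def invImg (i : Fin m) (σ : Equiv.Perm (Fin m)) (pv qv : Fin m → ℚ) :
    Set (Fin m → ℚ_[p]) := LFTinv p i σ pv qv '' Dm' p m

/-- A family of hyperbolic LFTs indexed by `Λ` is an `m`-dimensional continued fraction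
system if the sets `F_λ⁻¹(D_m')` form a partition of `D_m'`. -/
def IsCFSystem (m : ℕ) {Λ : Type*} (iF : Λ → Fin m) (σF : Λ → Equiv.Perm (Fin m))
    (pF qF : Λ → Fin m → ℚ) : Prop :=
  (∀ l, Hyperbolic p (iF l) (σF l) (pF l) (qF l)) ∧
  (⋃ l, invImg p (iF l) (σF l) (pF l) (qF l)) = Dm' p m ∧
  (Pairwise fun l l' => Disjoint (invImg p (iF l) (σF l) (pF l) (qF l))
      (invImg p (iF l') (σF l') (pF l') (qF l')))

/-- The sup-norm `|z|_p = max_j |z_j|_p` on `ℚ_p^m`. -/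
def supNorm (z : Fin m → ℚ_[p]) : NNReal := Finset.univ.sup fun j => ‖z j‖₊

/-- `v ∈ ℚ` is the integral part of `α ∈ ℚ_p` if it is of the form
`∑_{n=0}^{N} d_n p^{-n}` with digits `d_n ∈ {0, …, p-1}` and `α - v ∈ pℤ_p`. -/
def IsIntegralPart (α : ℚ_[p]) (v : ℚ) : Prop :=
  (∃ N : ℕ, ∃ d : ℕ → ℕ, (∀ n, d n < p) ∧
      v = ∑ n ∈ Finset.range (N + 1), (d n : ℚ) / (p : ℚ) ^ n) ∧
  ‖α - (v : ℚ_[p])‖ ≤ (p : ℝ)⁻¹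

/-- The integral part `⌊α⌋_p ∈ ℚ` of a `p`-adic number. -/
def padicFloor (α : ℚ_[p]) : ℚ :=
  if h : ∃ v : ℚ, IsIntegralPart p α v then h.choose else 0

/-- `J_N`: rationals `∑_{n=0}^{N} c_n p^{-n}` with digits `c_n ∈ {0,…,p-1}` and `c_N ≠ 0`. -/
def Jset (N : ℕ) : Set ℚ :=
  {v | ∃ c : ℕ → ℕ, (∀ n, c n < p) ∧ c N ≠ 0 ∧
      v = ∑ n ∈ Finset.range (N + 1), (c n : ℚ) / (p : ℚ) ^ n}

/-- The exponent `k = max(ord_p x - ℓ, 0)`, with `k = 0` when `ℓ = ∞`. -/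
def kexp (ℓ : ℕ∞) (x : ℚ_[p]) : ℤ :=
  if ℓ = ⊤ then 0 else max (x.valuation - ((ℓ.untopD 0 : ℕ) : ℤ)) 0

/-- The transformation `T_ℓ : pℤ_p → pℤ_p`, `T_ℓ(x) = p^k/x - ⌊p^k/x⌋_p` with
`k = max(ord_p x - ℓ, 0)`, `T_ℓ(0) = 0`. -/
def Tell (ℓ : ℕ∞) (x : ℚ_[p]) : ℚ_[p] :=
  if x = 0 then 0
  else (p : ℚ_[p]) ^ kexp p ℓ x / x - (padicFloor p ((p : ℚ_[p]) ^ kexp p ℓ x / x) : ℚ_[p])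

/-- The one-dimensional set `D_1' ⊆ pℤ_p` (elements of `pℤ_p` irrational over `ℤ`). -/
def D1 : Set ℚ_[p] :=
  {x | (∀ c a : ℤ, (c : ℚ_[p]) + (a : ℚ_[p]) * x = 0 → c = 0 ∧ a = 0) ∧ x ∈ pZ p}

/-- Index set of the continued fraction system of `T_ℓ`:
pairs `(k, v)` with `k > 0, v ∈ J_ℓ`, or `k = 0` and `v ∈ J_1 ∪ ⋯ ∪ J_ℓ`. -/
def SysIndex (ℓ : ℕ∞) : Set (ℕ × ℚ) :=
  {kv | (0 < kv.1 ∧ ∃ n : ℕ, (n : ℕ∞) = ℓ ∧ kv.2 ∈ Jset p n) ∨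
        (kv.1 = 0 ∧ ∃ n : ℕ, 1 ≤ n ∧ (n : ℕ∞) ≤ ℓ ∧ kv.2 ∈ Jset p n)}

/-- The exponent `r = max(-ℓ - ord_p(x_{k+1}) + ord_p(x_1), 0)` (`0` if `ℓ = ∞`). -/
def rexp (ℓ : ℕ∞) (x1 xk : ℚ_[p]) : ℤ :=
  if ℓ = ⊤ then 0 else max (-((ℓ.untopD 0 : ℕ) : ℤ) - xk.valuation + x1.valuation) 0

/-- The multidimensional transformation `T_{ℓ,m}` on `D_m'`. -/
def Tellm (ℓ : ℕ∞) (x : Fin m → ℚ_[p]) : Fin m → ℚ_[p] := fun k =>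
  if h : (k : ℕ) + 1 = m then Tell p ℓ (x ⟨0, k.pos⟩)
  else
    (p : ℚ_[p]) ^ rexp p ℓ (x ⟨0, k.pos⟩)
        (x ⟨(k : ℕ) + 1, lt_of_le_of_ne (Nat.succ_le_of_lt k.isLt) h⟩) *
        x ⟨(k : ℕ) + 1, lt_of_le_of_ne (Nat.succ_le_of_lt k.isLt) h⟩ / x ⟨0, k.pos⟩ -
      (padicFloor p
        ((p : ℚ_[p]) ^ rexp p ℓ (x ⟨0, k.pos⟩)
            (x ⟨(k : ℕ) + 1, lt_of_le_of_ne (Nat.succ_le_of_lt k.isLt) h⟩) *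
          x ⟨(k : ℕ) + 1, lt_of_le_of_ne (Nat.succ_le_of_lt k.isLt) h⟩ / x ⟨0, k.pos⟩) : ℚ_[p])

/-- The vector of powers `p⃗^{(ℓ,x)}` of Definition 3.13. -/
def pParam (ℓ : ℕ∞) (x : Fin m → ℚ_[p]) (k : Fin m) : ℚ :=
  if ℓ = ⊤ then 1
  else if h : (k : ℕ) + 1 = m then
    (p : ℚ) ^ max (-((ℓ.untopD 0 : ℕ) : ℤ) + (x ⟨0, k.pos⟩).valuation) 0
  else
    (p : ℚ) ^ max (-((ℓ.untopD 0 : ℕ) : ℤ) -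
      (x ⟨(k : ℕ) + 1, lt_of_le_of_ne (Nat.succ_le_of_lt k.isLt) h⟩).valuation +
      (x ⟨0, k.pos⟩).valuation) 0

/-- The vector `q⃗^{(ℓ,x)}` of Definition 3.13. -/
def qParam (ℓ : ℕ∞) (x : Fin m → ℚ_[p]) (k : Fin m) : ℚ :=
  if h : (k : ℕ) + 1 = m then padicFloor p ((pParam p ℓ x k : ℚ_[p]) / x ⟨0, k.pos⟩)
  else padicFloor p ((pParam p ℓ x k : ℚ_[p]) *
    x ⟨(k : ℕ) + 1, lt_of_le_of_ne (Nat.succ_le_of_lt k.isLt) h⟩ / x ⟨0, k.pos⟩)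

/-- The `j`-th convergent `π(α; j) = F⁻¹_{ψ_0} ∘ ⋯ ∘ F⁻¹_{ψ_j} (0̄)`. -/
def convergent (Finv : ℕ → (Fin m → ℚ_[p]) → Fin m → ℚ_[p]) (j : ℕ) : Fin m → ℚ_[p] :=
  (List.range (j + 1)).foldr (fun t acc => Finv t acc) 0

/-- The exponent `h = max_k (ord_p(p_s) - ord_p(p_k))` of Section 5. -/
def hVal (i : Fin m) (σ : Equiv.Perm (Fin m)) (pv : Fin m → ℚ) : ℤ :=
  Finset.univ.sup' ⟨i, Finset.mem_univ i⟩
    fun k => padicValRat p (pv (σ⁻¹ i)) - padicValRat p (pv k)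

/-- The cylinders `V_k^{(y)}` of Section 5. -/
def Vset (i : Fin m) (σ : Equiv.Perm (Fin m)) (pv qv : Fin m → ℚ) (n : ℕ)
    (a : Fin m → ℚ_[p]) (y : ℕ) (k : Fin m) : Set ℚ_[p] :=
  if k = i then
    {t | ∃ w : ℚ_[p], ‖w‖ ≤ (p : ℝ) ^ (-(hVal p i σ pv)) ∧
      t = (pv (σ⁻¹ i) : ℚ_[p]) / (a (σ⁻¹ i) + (qv (σ⁻¹ i) : ℚ_[p])) +
        (p : ℚ_[p]) ^ ((n : ℤ) + padicValRat p (pv (σ⁻¹ i)) -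
          2 * padicValRat p (qv (σ⁻¹ i))) * ((y : ℚ_[p]) + w)}
  else
    {t | ∃ w : ℚ_[p], ‖w‖ ≤ (p : ℝ) ^ (-(n : ℤ)) ∧
      t = ((pv (σ⁻¹ i) : ℚ_[p]) / (a (σ⁻¹ i) + (qv (σ⁻¹ i) : ℚ_[p])) +
        (p : ℚ_[p]) ^ ((n : ℤ) + padicValRat p (pv (σ⁻¹ i)) -
          2 * padicValRat p (qv (σ⁻¹ i))) * (y : ℚ_[p])) *
        (a (σ⁻¹ k) + (qv (σ⁻¹ k) : ℚ_[p])) / (pv (σ⁻¹ k) : ℚ_[p])}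

end PadicCF

namespace PadicCF

open MeasureTheory Filter Topology
open scoped ENNReal NNReal

variable (p : ℕ) [Fact p.Prime]

section AuxLemmas
variable {p}
variable {m : ℕ}

lemma perm_inv_apply_self {α : Type*} (σ : Equiv.Perm α) (x : α) : σ⁻¹ (σ x) = x := by simp

lemma perm_apply_inv_self {α : Type*} (σ : Equiv.Perm α) (x : α) : σ (σ⁻¹ x) = x := by simp

lemma exists_int_mul (q : ℚ) (n : ℤ) (h : (q.den : ℤ) ∣ n) : ∃ z : ℤ, (z : ℚ) = q * n := by
  obtain ⟨k, hk⟩ := h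
  refine ⟨q.num * k, ?_⟩
  push_cast
  rw [hk]
  push_cast
  rw [← mul_assoc, Rat.mul_den_eq_num]


lemma mem_Dm_rat {x : Fin m → ℚ_[p]} (hx : x ∈ Dm p m) (c : ℚ) (a : Fin m → ℚ)
    (h : (c : ℚ_[p]) + ∑ j, (a j : ℚ_[p]) * x j = 0) : c = 0 ∧ ∀ j, a j = 0 := by
  set N : ℤ := (c.den : ℤ) * ∏ j, ((a j).den : ℤ) with hN
  have hNne : N ≠ 0 := by
    apply mul_ne_zero
    · exact_mod_cast c.den_nz
    · exact Finset.prod_ne_zero_iff.mpr fun j _ => by exact_mod_cast (a j).den_nz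
  obtain ⟨c', hc'⟩ := exists_int_mul c N (Dvd.intro _ rfl)
  have ha' : ∀ j, ∃ z : ℤ, (z : ℚ) = a j * N := by
    intro j
    apply exists_int_mul
    exact Dvd.dvd.mul_left (Finset.dvd_prod_of_mem _ (Finset.mem_univ j)) _
  choose a' ha' using ha'
  have key : ((c' : ℤ) : ℚ_[p]) + ∑ j, ((a' j : ℤ) : ℚ_[p]) * x j = 0 := by
    have h1 : ((c' : ℤ) : ℚ_[p]) = (c : ℚ_[p]) * (N : ℚ_[p]) := by
      have := congrArg (fun t : ℚ => (t : ℚ_[p])) hc'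
      push_cast at this ⊢
      exact this
    have h2 : ∀ j, ((a' j : ℤ) : ℚ_[p]) = (a j : ℚ_[p]) * (N : ℚ_[p]) := by
      intro j
      have := congrArg (fun t : ℚ => (t : ℚ_[p])) (ha' j)
      push_cast at this ⊢
      exact this
    calc ((c' : ℤ) : ℚ_[p]) + ∑ j, ((a' j : ℤ) : ℚ_[p]) * x j
        = (N : ℚ_[p]) * ((c : ℚ_[p]) + ∑ j, (a j : ℚ_[p]) * x j) := by
          rw [mul_add, Finset.mul_sum, h1]
          congr 1
          · ring
          · exact Finset.sum_congr rfl fun j _ => by rw [h2 j]; ring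
      _ = 0 := by rw [h, mul_zero]
  obtain ⟨hc0, ha0⟩ := hx c' a' key
  have hNQ : (N : ℚ) ≠ 0 := Int.cast_ne_zero.mpr hNne
  constructor
  · have : c * N = 0 := by rw [← hc', hc0]; simp
    exact (mul_eq_zero.mp this).resolve_right hNQ
  · intro j
    have : a j * N = 0 := by rw [← ha' j, ha0 j]; simp
    exact (mul_eq_zero.mp this).resolve_right hNQ

lemma Dm_add_rat_ne {x : Fin m → ℚ_[p]} (hx : x ∈ Dm p m) (j : Fin m) (q : ℚ) :
    x j + (q : ℚ_[p]) ≠ 0 := by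
  intro h
  have hs : (q : ℚ_[p]) + ∑ k, (((if k = j then 1 else 0 : ℚ)) : ℚ_[p]) * x k = 0 := by
    have : ∑ k, (((if k = j then 1 else 0 : ℚ)) : ℚ_[p]) * x k = x j := by
      simp [apply_ite (fun t : ℚ => (t : ℚ_[p]))]
    rw [this, add_comm]
    exact h
  have := (mem_Dm_rat hx q _ hs).2 j
  simp at this

lemma Dm_ne_zero {x : Fin m → ℚ_[p]} (hx : x ∈ Dm p m) (j : Fin m) : x j ≠ 0 := by
  simpa using Dm_add_rat_ne hx j 0

lemma sum_ite_split (i0 : Fin m) (f g : Fin m → ℚ_[p]) :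
    ∑ j, (if j = i0 then f j else g j) = f i0 + ∑ j, (if j = i0 then 0 else g j) := by
  have he : ∀ j ∈ Finset.univ, (if j = i0 then f j else g j)
      = (if j = i0 then f j else 0) + (if j = i0 then 0 else g j) := by
    intro j _; split <;> simp
  rw [Finset.sum_congr rfl he, Finset.sum_add_distrib]
  simp

lemma lft_mapsTo (i : Fin m) (σ : Equiv.Perm (Fin m)) (pv qv : Fin m → ℚ)
    (hpv : ∀ k, pv k ≠ 0) {x : Fin m → ℚ_[p]} (hx : x ∈ Dm p m) :
    LFT p i σ pv qv x ∈ Dm p m := by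
  have hxi : x i ≠ 0 := Dm_ne_zero hx i
  intro c a h
  set Q : ℚ := ∑ k, (a k : ℚ) * qv k with hQdef
  set A : Fin m → ℚ := fun j => if j = i then (c : ℚ) - Q else (a (σ⁻¹ j) : ℚ) * pv (σ⁻¹ j)
    with hAdef
  set C : ℚ := (a (σ⁻¹ i) : ℚ) * pv (σ⁻¹ i) with hCdef
  -- per-term identity
  have hterm : ∀ k, (a k : ℚ_[p]) * LFT p i σ pv qv x k * x i
      = (if k = σ⁻¹ i then (a k : ℚ_[p]) * (pv k : ℚ_[p])
          else (a k : ℚ_[p]) * (pv k : ℚ_[p]) * x (σ k))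
        - (a k : ℚ_[p]) * (qv k : ℚ_[p]) * x i := by
    intro k
    simp only [LFT]
    split_ifs with hk
    · field_simp
    · field_simp
  have hEq1 : x i * ((c : ℚ_[p]) + ∑ k, (a k : ℚ_[p]) * LFT p i σ pv qv x k)
      = (c : ℚ_[p]) * x i
        + ((C : ℚ_[p]) + ∑ k, (if k = σ⁻¹ i then 0
            else (a k : ℚ_[p]) * (pv k : ℚ_[p]) * x (σ k)))
        - (Q : ℚ_[p]) * x i := by
    rw [mul_add, Finset.mul_sum]
    have : ∀ k ∈ Finset.univ, x i * ((a k : ℚ_[p]) * LFT p i σ pv qv x k)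
        = (if k = σ⁻¹ i then (a k : ℚ_[p]) * (pv k : ℚ_[p])
            else (a k : ℚ_[p]) * (pv k : ℚ_[p]) * x (σ k))
          - (a k : ℚ_[p]) * (qv k : ℚ_[p]) * x i := by
      intro k _
      rw [← hterm k]; ring
    rw [Finset.sum_congr rfl this, Finset.sum_sub_distrib,
      sum_ite_split (σ⁻¹ i) (fun k => (a k : ℚ_[p]) * (pv k : ℚ_[p]))
        (fun k => (a k : ℚ_[p]) * (pv k : ℚ_[p]) * x (σ k))]
    have hQc : (Q : ℚ_[p]) = ∑ k, (a k : ℚ_[p]) * (qv k : ℚ_[p]) := by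
      rw [hQdef]; push_cast; ring
    have hCc : (C : ℚ_[p]) = (a (σ⁻¹ i) : ℚ_[p]) * (pv (σ⁻¹ i) : ℚ_[p]) := by
      rw [hCdef]; push_cast; ring
    rw [hQc, hCc, ← Finset.sum_mul]
    ring
  have hEq2 : (C : ℚ_[p]) + ∑ j, (A j : ℚ_[p]) * x j
      = x i * ((c : ℚ_[p]) + ∑ k, (a k : ℚ_[p]) * LFT p i σ pv qv x k) := by
    rw [hEq1]
    have hAc : ∀ j ∈ Finset.univ, (A j : ℚ_[p]) * x j
        = (if j = i then ((c : ℚ_[p]) - (Q : ℚ_[p])) * x j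
            else (a (σ⁻¹ j) : ℚ_[p]) * (pv (σ⁻¹ j) : ℚ_[p]) * x j) := by
      intro j _
      by_cases hj : j = i
      · simp only [hAdef, if_pos hj]
        rw [hj]
        push_cast
        ring
      · simp only [hAdef, if_neg hj]
        push_cast
        ring
    rw [Finset.sum_congr rfl hAc,
      sum_ite_split i (fun j => ((c : ℚ_[p]) - (Q : ℚ_[p])) * x j)
        (fun j => (a (σ⁻¹ j) : ℚ_[p]) * (pv (σ⁻¹ j) : ℚ_[p]) * x j)]
    have hre : ∑ j, (if j = i then 0
          else (a (σ⁻¹ j) : ℚ_[p]) * (pv (σ⁻¹ j) : ℚ_[p]) * x j)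
        = ∑ k, (if k = σ⁻¹ i then 0 else (a k : ℚ_[p]) * (pv k : ℚ_[p]) * x (σ k)) := by
      rw [← Equiv.sum_comp σ (fun j => if j = i then 0
          else (a (σ⁻¹ j) : ℚ_[p]) * (pv (σ⁻¹ j) : ℚ_[p]) * x j)]
      refine Finset.sum_congr rfl fun k _ => ?_
      have hcond : σ k = i ↔ k = σ⁻¹ i := by
        constructor
        · intro hh; rw [← hh]; simp
        · intro hh; rw [hh]; simp
      simp only [perm_inv_apply_self, hcond]
    rw [hre]
    ring
  have h0 : (C : ℚ_[p]) + ∑ j, (A j : ℚ_[p]) * x j = 0 := by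
    rw [hEq2, h, mul_zero]
  obtain ⟨hC0, hA0⟩ := mem_Dm_rat hx C A h0
  have has : a (σ⁻¹ i) = 0 := by
    rw [hCdef] at hC0
    rcases mul_eq_zero.mp hC0 with h1 | h1
    · exact_mod_cast h1
    · exact absurd h1 (hpv _)
  have haall : ∀ k, a k = 0 := by
    intro k
    by_cases hk : k = σ⁻¹ i
    · rw [hk]; exact has
    · have hσk : σ k ≠ i := fun hh => hk (by rw [← hh]; simp)
      have := hA0 (σ k)
      simp only [hAdef, if_neg hσk, perm_inv_apply_self] at this
      rcases mul_eq_zero.mp this with h1 | h1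
      · exact_mod_cast h1
      · exact absurd h1 (hpv _)
  refine ⟨?_, haall⟩
  have := hA0 i
  simp only [hAdef, if_pos rfl] at this
  have hQ0 : Q = 0 := by
    rw [hQdef]
    exact Finset.sum_eq_zero fun k _ => by rw [haall k]; simp
  rw [hQ0, sub_zero] at this
  exact_mod_cast this

lemma aux1 (A P Ys : ℚ_[p]) (hYs : Ys ≠ 0) : Ys * (A * (P / Ys)) = A * P := by
  rw [mul_comm Ys (A * (P / Ys)), mul_assoc, div_mul_cancel₀ P hYs]

lemma aux2 (A P Pt yt qt Ys : ℚ_[p]) (hYs : Ys ≠ 0) (hPt : Pt ≠ 0) :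
    Ys * (A * (P * (yt + qt) / (Pt * Ys))) = A * P / Pt * yt + A * P * qt / Pt := by
  field_simp

lemma lftinv_mapsTo (i : Fin m) (σ : Equiv.Perm (Fin m)) (pv qv : Fin m → ℚ)
    (hpv : ∀ k, pv k ≠ 0) {y : Fin m → ℚ_[p]} (hy : y ∈ Dm p m) :
    LFTinv p i σ pv qv y ∈ Dm p m := by
  have hYs : y (σ⁻¹ i) + (qv (σ⁻¹ i) : ℚ_[p]) ≠ 0 := Dm_add_rat_ne hy _ _
  have hpc : ∀ k, (pv k : ℚ_[p]) ≠ 0 := fun k => Rat.cast_ne_zero.mpr (hpv k)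
  intro c a h
  set B : Fin m → ℚ := fun t => if t = σ⁻¹ i then (c : ℚ)
      else (a (σ t) : ℚ) * pv (σ⁻¹ i) / pv t with hBdef
  set C : ℚ := (c : ℚ) * qv (σ⁻¹ i) + ∑ k, (if k = i then (a k : ℚ) * pv (σ⁻¹ i)
      else (a k : ℚ) * pv (σ⁻¹ i) * qv (σ⁻¹ k) / pv (σ⁻¹ k)) with hCdef
  have hterm : ∀ k, (y (σ⁻¹ i) + (qv (σ⁻¹ i) : ℚ_[p])) * ((a k : ℚ_[p]) * LFTinv p i σ pv qv y k)
      = (if k = i then 0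
          else ((a k : ℚ_[p]) * (pv (σ⁻¹ i) : ℚ_[p]) / (pv (σ⁻¹ k) : ℚ_[p])) * y (σ⁻¹ k))
        + (if k = i then (a k : ℚ_[p]) * (pv (σ⁻¹ i) : ℚ_[p])
          else (a k : ℚ_[p]) * (pv (σ⁻¹ i) : ℚ_[p]) * (qv (σ⁻¹ k) : ℚ_[p]) / (pv (σ⁻¹ k) : ℚ_[p])) := by
    intro k
    simp only [LFTinv]
    split_ifs with hk
    · rw [zero_add]
      exact aux1 _ _ _ hYs
    · exact aux2 _ _ _ _ _ _ hYs (hpc _)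
  have hEq : (C : ℚ_[p]) + ∑ t, (B t : ℚ_[p]) * y t
      = (y (σ⁻¹ i) + (qv (σ⁻¹ i) : ℚ_[p]))
        * ((c : ℚ_[p]) + ∑ k, (a k : ℚ_[p]) * LFTinv p i σ pv qv y k) := by
    rw [mul_add, Finset.mul_sum, Finset.sum_congr rfl (fun k _ => hterm k),
      Finset.sum_add_distrib]
    have hCc : (C : ℚ_[p]) = (c : ℚ_[p]) * (qv (σ⁻¹ i) : ℚ_[p])
        + ∑ k, (if k = i then (a k : ℚ_[p]) * (pv (σ⁻¹ i) : ℚ_[p])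
            else (a k : ℚ_[p]) * (pv (σ⁻¹ i) : ℚ_[p]) * (qv (σ⁻¹ k) : ℚ_[p]) / (pv (σ⁻¹ k) : ℚ_[p])) := by
      rw [hCdef]
      push_cast
      congr 1
      refine Finset.sum_congr rfl fun k _ => ?_
      by_cases hk : k = i
      · simp only [if_pos hk]
        push_cast
        ring
      · simp only [if_neg hk]
        push_cast
        ring
    have hBc : ∀ t ∈ Finset.univ, (B t : ℚ_[p]) * y t
        = (if t = σ⁻¹ i then (c : ℚ_[p]) * y t
            else ((a (σ t) : ℚ_[p]) * (pv (σ⁻¹ i) : ℚ_[p]) / (pv t : ℚ_[p])) * y t) := by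
      intro t _
      by_cases ht : t = σ⁻¹ i
      · simp only [hBdef, if_pos ht]
        push_cast
        ring
      · simp only [hBdef, if_neg ht]
        push_cast
        ring
    rw [hCc, Finset.sum_congr rfl hBc,
      sum_ite_split (σ⁻¹ i) (fun t => (c : ℚ_[p]) * y t)
        (fun t => ((a (σ t) : ℚ_[p]) * (pv (σ⁻¹ i) : ℚ_[p]) / (pv t : ℚ_[p])) * y t)]
    have hre : ∑ t, (if t = σ⁻¹ i then 0
          else ((a (σ t) : ℚ_[p]) * (pv (σ⁻¹ i) : ℚ_[p]) / (pv t : ℚ_[p])) * y t)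
        = ∑ k, (if k = i then 0
          else ((a k : ℚ_[p]) * (pv (σ⁻¹ i) : ℚ_[p]) / (pv (σ⁻¹ k) : ℚ_[p])) * y (σ⁻¹ k)) := by
      rw [← Equiv.sum_comp σ⁻¹ (fun t => if t = σ⁻¹ i then 0
          else ((a (σ t) : ℚ_[p]) * (pv (σ⁻¹ i) : ℚ_[p]) / (pv t : ℚ_[p])) * y t)]
      refine Finset.sum_congr rfl fun k _ => ?_
      have hcond : σ⁻¹ k = σ⁻¹ i ↔ k = i := by
        constructor
        · intro hh
          have := congrArg σ hh
          simpa using this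
        · intro hh
          rw [hh]
      simp only [perm_apply_inv_self, hcond]
    rw [hre]
    ring
  have h0 : (C : ℚ_[p]) + ∑ t, (B t : ℚ_[p]) * y t = 0 := by
    rw [hEq, h, mul_zero]
  obtain ⟨hC0, hB0⟩ := mem_Dm_rat hy C B h0
  have hc0 : c = 0 := by
    have := hB0 (σ⁻¹ i)
    simp only [hBdef, if_pos rfl] at this
    exact_mod_cast this
  have hane : ∀ k, k ≠ i → a k = 0 := by
    intro k hk
    have ht : σ⁻¹ k ≠ σ⁻¹ i := fun hh => hk (by simpa using congrArg σ hh)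
    have := hB0 (σ⁻¹ k)
    simp only [hBdef, if_neg ht, perm_apply_inv_self] at this
    rcases div_eq_zero_iff.mp this with h1 | h1
    · rcases mul_eq_zero.mp h1 with h2 | h2
      · exact_mod_cast h2
      · exact absurd h2 (hpv _)
    · exact absurd h1 (hpv _)
  refine ⟨hc0, fun k => ?_⟩
  by_cases hk : k = i
  · subst hk
    rw [hCdef, hc0] at hC0
    have hsum : ∑ j, (if j = k then (a j : ℚ) * pv (σ⁻¹ k)
        else (a j : ℚ) * pv (σ⁻¹ k) * qv (σ⁻¹ j) / pv (σ⁻¹ j)) = (a k : ℚ) * pv (σ⁻¹ k) := by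
      rw [Finset.sum_eq_single k]
      · simp
      · intro j _ hj
        rw [if_neg hj, hane j hj]
        simp
      · intro hj
        exact absurd (Finset.mem_univ k) hj
    rw [hsum] at hC0
    simp only [Int.cast_zero, zero_mul, zero_add] at hC0
    rcases mul_eq_zero.mp hC0 with h1 | h1
    · exact_mod_cast h1
    · exact absurd h1 (hpv _)
  · exact hane k hk

lemma aux3 (P Pt xk xi : ℚ_[p]) (hP : P ≠ 0) (hPt : Pt ≠ 0) (hxi : xi ≠ 0) :
    P * (Pt * xk / xi) / (Pt * (P / xi)) = xk := by
  field_simp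

lemma aux4 (P Pk yk qk Ys : ℚ_[p]) (hP : P ≠ 0) (hPk : Pk ≠ 0) (hYs : Ys ≠ 0) :
    Pk * (P * (yk + qk) / (Pk * Ys)) / (P / Ys) - qk = yk := by
  field_simp
  ring

lemma lft_left_inv (i : Fin m) (σ : Equiv.Perm (Fin m)) (pv qv : Fin m → ℚ)
    (hpv : ∀ k, pv k ≠ 0) {x : Fin m → ℚ_[p]} (hx : x ∈ Dm p m) :
    LFTinv p i σ pv qv (LFT p i σ pv qv x) = x := by
  have hxi : x i ≠ 0 := Dm_ne_zero hx i
  have hpc : ∀ k, (pv k : ℚ_[p]) ≠ 0 := fun k => Rat.cast_ne_zero.mpr (hpv k)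
  have hYs : LFT p i σ pv qv x (σ⁻¹ i) + (qv (σ⁻¹ i) : ℚ_[p])
      = (pv (σ⁻¹ i) : ℚ_[p]) / x i := by
    simp [LFT]
  funext k
  simp only [LFTinv]
  split_ifs with hk
  · rw [hk, hYs, div_div_eq_mul_div, mul_comm, mul_div_assoc, div_self (hpc _), mul_one]
  · have hne : σ⁻¹ k ≠ σ⁻¹ i := fun hh => hk (by simpa using congrArg σ hh)
    have hLk : LFT p i σ pv qv x (σ⁻¹ k) + (qv (σ⁻¹ k) : ℚ_[p])
        = (pv (σ⁻¹ k) : ℚ_[p]) * x k / x i := by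
      simp only [LFT, if_neg hne, perm_apply_inv_self]
      ring
    rw [hLk, hYs]
    exact aux3 _ _ _ _ (hpc _) (hpc _) hxi

lemma lft_right_inv (i : Fin m) (σ : Equiv.Perm (Fin m)) (pv qv : Fin m → ℚ)
    (hpv : ∀ k, pv k ≠ 0) {y : Fin m → ℚ_[p]} (hy : y ∈ Dm p m) :
    LFT p i σ pv qv (LFTinv p i σ pv qv y) = y := by
  have hYs : y (σ⁻¹ i) + (qv (σ⁻¹ i) : ℚ_[p]) ≠ 0 := Dm_add_rat_ne hy _ _
  have hpc : ∀ k, (pv k : ℚ_[p]) ≠ 0 := fun k => Rat.cast_ne_zero.mpr (hpv k)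
  have hxi : LFTinv p i σ pv qv y i
      = (pv (σ⁻¹ i) : ℚ_[p]) / (y (σ⁻¹ i) + (qv (σ⁻¹ i) : ℚ_[p])) := by
    simp [LFTinv]
  funext k
  simp only [LFT]
  split_ifs with hk
  · subst hk
    rw [hxi, div_div_eq_mul_div, mul_comm, mul_div_assoc, div_self (hpc _), mul_one,
      add_sub_cancel_right]
  · have hσk : σ k ≠ i := fun hh => hk (by rw [← hh]; simp)
    have hxk : LFTinv p i σ pv qv y (σ k)
        = (pv (σ⁻¹ i) : ℚ_[p]) * (y k + (qv k : ℚ_[p]))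
          / ((pv k : ℚ_[p]) * (y (σ⁻¹ i) + (qv (σ⁻¹ i) : ℚ_[p]))) := by
      simp only [LFTinv, if_neg hσk, perm_inv_apply_self]
    rw [hxk, hxi]
    exact aux4 _ _ _ _ _ (hpc _) (hpc _) hYs


end AuxLemmas

theorem lft_bijOn_invOn (m : ℕ) (hm : 1 ≤ m) (i : Fin m) (σ : Equiv.Perm (Fin m))
    (pv qv : Fin m → ℚ) (hpv : ∀ k, pv k ≠ 0) :
    Set.BijOn (LFT p i σ pv qv) (Dm p m) (Dm p m) ∧
    Set.InvOn (LFTinv p i σ pv qv) (LFT p i σ pv qv) (Dm p m) (Dm p m) := by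
  have hL : Set.LeftInvOn (LFTinv p i σ pv qv) (LFT p i σ pv qv) (Dm p m) :=
    fun x hx => lft_left_inv i σ pv qv hpv hx
  have hR : Set.RightInvOn (LFTinv p i σ pv qv) (LFT p i σ pv qv) (Dm p m) :=
    fun y hy => lft_right_inv i σ pv qv hpv hy
  have hInv : Set.InvOn (LFTinv p i σ pv qv) (LFT p i σ pv qv) (Dm p m) (Dm p m) := ⟨hL, hR⟩
  exact ⟨hInv.bijOn (fun x hx => lft_mapsTo i σ pv qv hpv hx)
    (fun y hy => lftinv_mapsTo i σ pv qv hpv hy), hInv⟩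


end PadicCF
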